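/- For every n ≥ 4, the space of real n×n matrices is the internal direct sum of the seven subspaces V_0, V_1, V_2, V_3, V_4, V_5, V_6, and each of these subspaces is invariant under the S_n action (σ·X)_{ij} = X_{σ⁻¹(i),σ⁻¹(j)}. -/

import Mathlib

open Matrix

namespace GraphDecomp

variable (n : ℕ)

/-- The action of `Sₙ` on `n × n` matrices: `(σ · X) i j = X (σ⁻¹ i) (σ⁻¹ j)`. -/
def act (σ : Equiv.Perm (Fin n)) (X : Matrix (Fin n) (Fin n) ℝ) :
    Matrix (Fin n) (Fin n) ℝ :=
  Matrix.of fun i j => X (σ⁻¹ i) (σ⁻¹ j)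

/-- The all-ones matrix `J`. -/
def J : Matrix (Fin n) (Fin n) ℝ := Matrix.of fun _ _ => (1 : ℝ)

/-- `V₀`: multiples of the identity. -/
def V0 : Submodule ℝ (Matrix (Fin n) (Fin n) ℝ) where
  carrier := {X | ∃ a : ℝ, X = a • (1 : Matrix (Fin n) (Fin n) ℝ)}
  zero_mem' := ⟨0, by simp⟩
  add_mem' := by
    rintro X Y ⟨a, rfl⟩ ⟨b, rfl⟩
    exact ⟨a + b, (add_smul a b _).symm⟩
  smul_mem' := by
    rintro c X ⟨a, rfl⟩
    exact ⟨c * a, (mul_smul c a _).symm⟩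

/-- `V₁`: multiples of `J - I`. -/
def V1 : Submodule ℝ (Matrix (Fin n) (Fin n) ℝ) where
  carrier := {X | ∃ a : ℝ, X = a • (J n - 1)}
  zero_mem' := ⟨0, by simp⟩
  add_mem' := by
    rintro X Y ⟨a, rfl⟩ ⟨b, rfl⟩
    exact ⟨a + b, (add_smul a b _).symm⟩
  smul_mem' := by
    rintro c X ⟨a, rfl⟩
    exact ⟨c * a, (mul_smul c a _).symm⟩

/-- `V₂`: diagonal matrices with trace zero. -/
def V2 : Submodule ℝ (Matrix (Fin n) (Fin n) ℝ) where
  carrier := {X | (∀ i j, i ≠ j → X i j = 0) ∧ ∑ i, X i i = 0}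
  zero_mem' := ⟨fun _ _ _ => rfl, by simp⟩
  add_mem' := by
    rintro X Y ⟨hX1, hX2⟩ ⟨hY1, hY2⟩
    refine ⟨fun i j hij => ?_, ?_⟩
    · simp [Matrix.add_apply, hX1 i j hij, hY1 i j hij]
    · simp [Matrix.add_apply, Finset.sum_add_distrib, hX2, hY2]
  smul_mem' := by
    rintro c X ⟨hX1, hX2⟩
    refine ⟨fun i j hij => ?_, ?_⟩
    · simp [Matrix.smul_apply, hX1 i j hij]
    · simp [Matrix.smul_apply, ← Finset.mul_sum, hX2]

/-- `V₃`: matrices `r ⬝ 1ᵀ` with constant rows, `∑ rᵢ = 0`. -/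
def V3 : Submodule ℝ (Matrix (Fin n) (Fin n) ℝ) where
  carrier := {X | ∃ r : Fin n → ℝ, (∑ i, r i) = 0 ∧ X = Matrix.of fun i _ => r i}
  zero_mem' := ⟨0, by simp, rfl⟩
  add_mem' := by
    rintro X Y ⟨r, hr, rfl⟩ ⟨r', hr', rfl⟩
    exact ⟨r + r', by simp [Finset.sum_add_distrib, hr, hr'], by ext i j; simp⟩
  smul_mem' := by
    rintro c X ⟨r, hr, rfl⟩
    exact ⟨c • r, by simp [← Finset.mul_sum, hr], by ext i j; simp⟩

/-- `V₄`: matrices `1 ⬝ cᵀ` with constant columns, `∑ cⱼ = 0`. -/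
def V4 : Submodule ℝ (Matrix (Fin n) (Fin n) ℝ) where
  carrier := {X | ∃ c : Fin n → ℝ, (∑ j, c j) = 0 ∧ X = Matrix.of fun _ j => c j}
  zero_mem' := ⟨0, by simp, rfl⟩
  add_mem' := by
    rintro X Y ⟨r, hr, rfl⟩ ⟨r', hr', rfl⟩
    exact ⟨r + r', by simp [Finset.sum_add_distrib, hr, hr'], by ext i j; simp⟩
  smul_mem' := by
    rintro c X ⟨r, hr, rfl⟩
    exact ⟨c • r, by simp [← Finset.mul_sum, hr], by ext i j; simp⟩

/-- `V₅`: antisymmetric matrices whose rows sum to zero. -/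
def V5 : Submodule ℝ (Matrix (Fin n) (Fin n) ℝ) where
  carrier := {X | X = -Xᵀ ∧ ∀ i, ∑ j, X i j = 0}
  zero_mem' := ⟨by simp, by simp⟩
  add_mem' := by
    rintro X Y ⟨hX1, hX2⟩ ⟨hY1, hY2⟩
    refine ⟨?_, fun i => ?_⟩
    · rw [Matrix.transpose_add, neg_add]
      exact congrArg₂ (· + ·) hX1 hY1
    · simp [Matrix.add_apply, Finset.sum_add_distrib, hX2 i, hY2 i]
  smul_mem' := by
    rintro c X ⟨hX1, hX2⟩
    refine ⟨?_, fun i => ?_⟩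
    · rw [Matrix.transpose_smul, ← smul_neg]
      exact congrArg (c • ·) hX1
    · simp [Matrix.smul_apply, ← Finset.mul_sum, hX2 i]

/-- `V₆`: symmetric matrices with zero diagonal whose rows sum to zero. -/
def V6 : Submodule ℝ (Matrix (Fin n) (Fin n) ℝ) where
  carrier := {X | X = Xᵀ ∧ (∀ i, ∑ j, X i j = 0) ∧ ∀ i, X i i = 0}
  zero_mem' := ⟨by simp, by simp, by simp⟩
  add_mem' := by
    rintro X Y ⟨hX1, hX2, hX3⟩ ⟨hY1, hY2, hY3⟩
    refine ⟨?_, fun i => ?_, fun i => ?_⟩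
    · rw [Matrix.transpose_add]
      exact congrArg₂ (· + ·) hX1 hY1
    · simp [Matrix.add_apply, Finset.sum_add_distrib, hX2 i, hY2 i]
    · simp [Matrix.add_apply, hX3 i, hY3 i]
  smul_mem' := by
    rintro c X ⟨hX1, hX2, hX3⟩
    refine ⟨?_, fun i => ?_, fun i => ?_⟩
    · rw [Matrix.transpose_smul]
      exact congrArg (c • ·) hX1
    · simp [Matrix.smul_apply, ← Finset.mul_sum, hX2 i]
    · simp [Matrix.smul_apply, hX3 i]

/-- The family of the seven subspaces `V₀, …, V₆`. -/
def V : Fin 7 → Submodule ℝ (Matrix (Fin n) (Fin n) ℝ) :=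
  ![V0 n, V1 n, V2 n, V3 n, V4 n, V5 n, V6 n]

section Decomp
variable {n : ℕ} (X : Matrix (Fin n) (Fin n) ℝ)

/-- trace -/
noncomputable def trc : ℝ := ∑ i, X i i
/-- total sum -/
noncomputable def tot : ℝ := ∑ i, ∑ j, X i j
noncomputable def rowS (i : Fin n) : ℝ := ∑ j, X i j
noncomputable def colS (j : Fin n) : ℝ := ∑ i, X i j
noncomputable def aa : ℝ := trc X / n
noncomputable def bb : ℝ := (tot X - trc X) / (n * (n - 1))
noncomputable def pp (i : Fin n) : ℝ := rowS X i - tot X / n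
noncomputable def qq (i : Fin n) : ℝ := colS X i - tot X / n
noncomputable def dd (i : Fin n) : ℝ := X i i - aa X
noncomputable def DD (i : Fin n) : ℝ := (pp X i + qq X i - n * dd X i) / (2 - n)
noncomputable def rr (i : Fin n) : ℝ := (pp X i - DD X i) / n
noncomputable def cc (i : Fin n) : ℝ := (qq X i - DD X i) / n

lemma hN_ne (hn : 4 ≤ n) : (n : ℝ) ≠ 0 := by
  have : (4:ℝ) ≤ n := by exact_mod_cast hn
  linarith
lemma hN1_ne (hn : 4 ≤ n) : (n : ℝ) - 1 ≠ 0 := by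
  have : (4:ℝ) ≤ n := by exact_mod_cast hn
  linarith
lemma hN2_ne (hn : 4 ≤ n) : (2 : ℝ) - n ≠ 0 := by
  have : (4:ℝ) ≤ n := by exact_mod_cast hn
  linarith

lemma sum_pp (hn : 4 ≤ n) : ∑ i, pp X i = 0 := by
  have hN := hN_ne (n := n) hn
  simp only [pp, Finset.sum_sub_distrib, Finset.sum_const, Finset.card_univ, Fintype.card_fin,
    nsmul_eq_mul]
  rw [show ∑ i, rowS X i = tot X from rfl]
  field_simp
  ring

lemma sum_qq (hn : 4 ≤ n) : ∑ i, qq X i = 0 := by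
  have hN := hN_ne (n := n) hn
  simp only [qq, Finset.sum_sub_distrib, Finset.sum_const, Finset.card_univ, Fintype.card_fin,
    nsmul_eq_mul]
  rw [show ∑ i, colS X i = tot X by simp only [colS, tot]; exact Finset.sum_comm]
  field_simp
  ring

lemma sum_dd (hn : 4 ≤ n) : ∑ i, dd X i = 0 := by
  have hN := hN_ne (n := n) hn
  simp only [dd, aa, Finset.sum_sub_distrib, Finset.sum_const, Finset.card_univ, Fintype.card_fin,
    nsmul_eq_mul]
  rw [show ∑ i, X i i = trc X from rfl]
  field_simp
  ring

lemma sum_DD (hn : 4 ≤ n) : ∑ i, DD X i = 0 := by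
  simp only [DD, ← Finset.sum_div, Finset.sum_sub_distrib, Finset.sum_add_distrib,
    ← Finset.mul_sum, sum_pp X hn, sum_qq X hn, sum_dd X hn]
  simp

lemma sum_rr (hn : 4 ≤ n) : ∑ i, rr X i = 0 := by
  simp only [rr, ← Finset.sum_div, Finset.sum_sub_distrib, sum_pp X hn, sum_DD X hn]
  simp

lemma sum_cc (hn : 4 ≤ n) : ∑ i, cc X i = 0 := by
  simp only [cc, ← Finset.sum_div, Finset.sum_sub_distrib, sum_qq X hn, sum_DD X hn]
  simp

end Decomp
section Decomp2
variable {n : ℕ} (X : Matrix (Fin n) (Fin n) ℝ)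

noncomputable def M0 : Matrix (Fin n) (Fin n) ℝ := aa X • 1
noncomputable def M1 : Matrix (Fin n) (Fin n) ℝ := bb X • (J n - 1)
noncomputable def M2 : Matrix (Fin n) (Fin n) ℝ :=
  Matrix.of fun i j => if i = j then DD X i else 0
noncomputable def M3 : Matrix (Fin n) (Fin n) ℝ := Matrix.of fun i _ => rr X i
noncomputable def M4 : Matrix (Fin n) (Fin n) ℝ := Matrix.of fun _ j => cc X j
noncomputable def BB : Matrix (Fin n) (Fin n) ℝ := X - M0 X - M1 X - M2 X - M3 X - M4 X
noncomputable def M5 : Matrix (Fin n) (Fin n) ℝ := (2⁻¹ : ℝ) • (BB X - (BB X)ᵀ)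
noncomputable def M6 : Matrix (Fin n) (Fin n) ℝ := (2⁻¹ : ℝ) • (BB X + (BB X)ᵀ)

lemma BB_apply (i j : Fin n) :
    BB X i j = X i j - aa X * (if i = j then 1 else 0) - bb X * (if i = j then 0 else 1)
      - (if i = j then DD X i else 0) - rr X i - cc X j := by
  simp only [BB, M0, M1, M2, M3, M4, Matrix.sub_apply, Matrix.smul_apply, Matrix.one_apply,
    J, Matrix.of_apply, smul_eq_mul]
  split_ifs <;> ring

lemma rowB (hn : 4 ≤ n) (i : Fin n) : ∑ j, BB X i j = 0 := by
  have hN := hN_ne (n := n) hn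
  have hN1 := hN1_ne (n := n) hn
  have hN2 := hN2_ne (n := n) hn
  have h1 : ∑ j, (if i = j then (1:ℝ) else 0) = 1 := by simp
  have h2 : ∑ j, (if i = j then (0:ℝ) else 1) = (n:ℝ) - 1 := by
    have : ∀ j, (if i = j then (0:ℝ) else 1) = 1 - (if i = j then 1 else 0) := by
      intro j; split_ifs <;> ring
    simp only [this, Finset.sum_sub_distrib, h1, Finset.sum_const, Finset.card_univ,
      Fintype.card_fin, nsmul_eq_mul, mul_one]
  simp only [BB_apply, Finset.sum_sub_distrib, ← Finset.mul_sum, h1, h2,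
    Finset.sum_const, Finset.card_univ, Fintype.card_fin, nsmul_eq_mul,
    Finset.sum_ite_eq Finset.univ i, Finset.mem_univ, if_true, sum_cc X hn]
  rw [show ∑ j, X i j = rowS X i from rfl]
  have hr : (n:ℝ) * rr X i = pp X i - DD X i := by
    rw [rr]; field_simp
  rw [hr, pp]
  simp only [aa, bb]
  field_simp
  ring

end Decomp2
section Decomp3
variable {n : ℕ} (X : Matrix (Fin n) (Fin n) ℝ)

lemma colB (hn : 4 ≤ n) (j : Fin n) : ∑ i, BB X i j = 0 := by
  have hN := hN_ne (n := n) hn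
  have hN1 := hN1_ne (n := n) hn
  have hN2 := hN2_ne (n := n) hn
  have h1 : ∑ i, (if i = j then (1:ℝ) else 0) = 1 := by simp
  have h2 : ∑ i, (if i = j then (0:ℝ) else 1) = (n:ℝ) - 1 := by
    have : ∀ i : Fin n, (if i = j then (0:ℝ) else 1) = 1 - (if i = j then 1 else 0) := by
      intro i; split_ifs <;> ring
    simp only [this, Finset.sum_sub_distrib, h1, Finset.sum_const, Finset.card_univ,
      Fintype.card_fin, nsmul_eq_mul, mul_one]
  have h3 : ∑ i, (if i = j then DD X i else 0) = DD X j := by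
    simp
  simp only [BB_apply, Finset.sum_sub_distrib, ← Finset.mul_sum, h1, h2, h3,
    Finset.sum_const, Finset.card_univ, Fintype.card_fin, nsmul_eq_mul,
    sum_rr X hn]
  rw [show ∑ i, X i j = colS X j from rfl]
  have hc : (n:ℝ) * cc X j = qq X j - DD X j := by
    rw [cc]; field_simp
  rw [hc, qq]
  simp only [aa, bb]
  field_simp
  ring

lemma diagB (hn : 4 ≤ n) (i : Fin n) : BB X i i = 0 := by
  have hN := hN_ne (n := n) hn
  have hN2 := hN2_ne (n := n) hn
  rw [BB_apply]
  simp only [if_pos rfl, ↓reduceIte]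
  have hd : X i i = dd X i + aa X := by rw [dd]; ring
  rw [hd, rr, cc, DD]
  field_simp
  ring

end Decomp3
section Decomp4
variable {n : ℕ} (X : Matrix (Fin n) (Fin n) ℝ)

lemma M0_mem : M0 X ∈ V0 n := ⟨aa X, rfl⟩
lemma M1_mem : M1 X ∈ V1 n := ⟨bb X, rfl⟩
lemma M2_mem (hn : 4 ≤ n) : M2 X ∈ V2 n := by
  refine ⟨fun i j hij => ?_, ?_⟩
  · simp [M2, hij]
  · simp [M2, sum_DD X hn]
lemma M3_mem (hn : 4 ≤ n) : M3 X ∈ V3 n := ⟨rr X, sum_rr X hn, rfl⟩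
lemma M4_mem (hn : 4 ≤ n) : M4 X ∈ V4 n := ⟨cc X, sum_cc X hn, rfl⟩
lemma M5_mem (hn : 4 ≤ n) : M5 X ∈ V5 n := by
  refine ⟨?_, fun i => ?_⟩
  · ext i j; simp [M5, Matrix.transpose_apply]; ring
  · simp only [M5, Matrix.smul_apply, Matrix.sub_apply, Matrix.transpose_apply, smul_eq_mul,
      ← Finset.mul_sum, Finset.sum_sub_distrib, rowB X hn i, colB X hn i]
    simp
lemma M6_mem (hn : 4 ≤ n) : M6 X ∈ V6 n := by
  refine ⟨?_, fun i => ?_, fun i => ?_⟩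
  · ext i j; simp [M6, Matrix.transpose_apply]; ring
  · simp only [M6, Matrix.smul_apply, Matrix.add_apply, Matrix.transpose_apply, smul_eq_mul,
      ← Finset.mul_sum, Finset.sum_add_distrib, rowB X hn i, colB X hn i]
    simp
  · simp [M6, diagB X hn i]

lemma sum_M : M0 X + M1 X + M2 X + M3 X + M4 X + M5 X + M6 X = X := by
  have h56 : M5 X + M6 X = BB X := by
    ext i j
    simp [M5, M6]
    ring
  rw [add_assoc _ (M5 X) (M6 X), h56, BB]
  abel

lemma exists_decomp (hn : 4 ≤ n) :
    ∃ m : Fin 7 → Matrix (Fin n) (Fin n) ℝ, (∀ i, m i ∈ V n i) ∧ ∑ i, m i = X := by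
  refine ⟨![M0 X, M1 X, M2 X, M3 X, M4 X, M5 X, M6 X], fun i => ?_, ?_⟩
  · fin_cases i
    · exact M0_mem X
    · exact M1_mem X
    · exact M2_mem X hn
    · exact M3_mem X hn
    · exact M4_mem X hn
    · exact M5_mem X hn
    · exact M6_mem X hn
  · rw [Fin.sum_univ_seven]
    simpa using sum_M X

end Decomp4
section Zero
variable {n : ℕ}

lemma eq_zero_of_sum (hn : 4 ≤ n) (m : Fin 7 → Matrix (Fin n) (Fin n) ℝ)
    (hm : ∀ i, m i ∈ V n i) (hsum : ∑ i, m i = 0) : ∀ i, m i = 0 := by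
  have hN := hN_ne (n := n) hn
  have hN1 := hN1_ne (n := n) hn
  have hN2 := hN2_ne (n := n) hn
  obtain ⟨a, h0⟩ : m 0 ∈ V0 n := hm 0
  obtain ⟨b, h1⟩ : m 1 ∈ V1 n := hm 1
  obtain ⟨h2off, h2tr⟩ : m 2 ∈ V2 n := hm 2
  obtain ⟨r, hr, h3⟩ : m 3 ∈ V3 n := hm 3
  obtain ⟨c, hc, h4⟩ : m 4 ∈ V4 n := hm 4
  obtain ⟨h5t, h5row⟩ : m 5 ∈ V5 n := hm 5
  obtain ⟨h6t, h6row, h6diag⟩ : m 6 ∈ V6 n := hm 6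
  rw [Fin.sum_univ_seven] at hsum
  have h5a : ∀ i j, m 5 i j = -m 5 j i := by
    intro i j; conv_lhs => rw [h5t]
    simp
  have h6s : ∀ i j, m 6 i j = m 6 j i := by
    intro i j; conv_lhs => rw [h6t]
    simp
  have h5diag : ∀ i, m 5 i i = 0 := by
    intro i; have := h5a i i; linarith
  have hS : ∀ i j, a * (if i = j then 1 else 0) + b * (if i = j then 0 else 1)
      + m 2 i j + r i + c j + m 5 i j + m 6 i j = 0 := by
    intro i j
    have h := congrFun (congrFun hsum i) j
    simp only [Matrix.add_apply, Matrix.zero_apply] at h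
    rw [h0, h1, h3, h4] at h
    simp only [Matrix.smul_apply, Matrix.one_apply, Matrix.sub_apply, Matrix.of_apply,
      smul_eq_mul, J] at h
    split_ifs at h ⊢ <;> linarith
  -- diagonal equations
  have hSd : ∀ i, a + m 2 i i + r i + c i = 0 := by
    intro i
    have := hS i i
    simp only [eq_self_iff_true, if_true, mul_one, mul_zero, h5diag i, h6diag i,
      add_zero] at this
    linarith
  -- a = 0
  have ha : a = 0 := by
    have h := Finset.sum_congr rfl (fun i (_ : i ∈ Finset.univ) => hSd i)
    simp only [Finset.sum_add_distrib, Finset.sum_const, Finset.card_univ, Fintype.card_fin,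
      nsmul_eq_mul, h2tr, hr, hc, Finset.sum_const_zero, add_zero] at h
    have h' : (n:ℝ) * a = 0 := by linarith
    exact (mul_eq_zero.1 h').resolve_left hN
  -- row sums of m 2
  have hm2row : ∀ i, ∑ j, m 2 i j = m 2 i i := by
    intro i
    exact Finset.sum_eq_single_of_mem i (Finset.mem_univ i)
      (fun j _ hj => h2off i j (Ne.symm hj))
  have hm2col : ∀ j, ∑ i, m 2 i j = m 2 j j := by
    intro j
    exact Finset.sum_eq_single_of_mem j (Finset.mem_univ j)
      (fun i _ hi => h2off i j hi)
  have hone : ∀ i : Fin n, ∑ j, (if i = j then (1:ℝ) else 0) = 1 := by intro i; simp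
  have hone' : ∀ j : Fin n, ∑ i, (if i = j then (1:ℝ) else 0) = 1 := by intro j; simp
  have hnm : ∀ i : Fin n, ∑ j, (if i = j then (0:ℝ) else 1) = (n:ℝ) - 1 := by
    intro i
    have : ∀ j, (if i = j then (0:ℝ) else 1) = 1 - (if i = j then 1 else 0) := by
      intro j; split_ifs <;> ring
    simp only [this, Finset.sum_sub_distrib, hone i, Finset.sum_const, Finset.card_univ,
      Fintype.card_fin, nsmul_eq_mul, mul_one]
  have hnm' : ∀ j : Fin n, ∑ i, (if i = j then (0:ℝ) else 1) = (n:ℝ) - 1 := by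
    intro j
    have : ∀ i, (if i = j then (0:ℝ) else 1) = 1 - (if i = j then 1 else 0) := by
      intro i; split_ifs <;> ring
    simp only [this, Finset.sum_sub_distrib, hone' j, Finset.sum_const, Finset.card_univ,
      Fintype.card_fin, nsmul_eq_mul, mul_one]
  -- row equation
  have hRow : ∀ i, a + b * ((n:ℝ) - 1) + m 2 i i + (n:ℝ) * r i = 0 := by
    intro i
    have h := Finset.sum_congr rfl (fun j (_ : j ∈ Finset.univ) => hS i j)
    simp only [Finset.sum_add_distrib, ← Finset.mul_sum, hone i, hnm i, hm2row i,
      Finset.sum_const, Finset.card_univ, Fintype.card_fin, nsmul_eq_mul,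
      hc, h5row i, h6row i, Finset.sum_const_zero, add_zero, mul_one] at h
    linarith
  -- b = 0
  have hb : b = 0 := by
    have h := Finset.sum_congr rfl (fun i (_ : i ∈ Finset.univ) => hRow i)
    simp only [Finset.sum_add_distrib, Finset.sum_const, Finset.card_univ, Fintype.card_fin,
      nsmul_eq_mul, h2tr, ← Finset.mul_sum, hr, mul_zero, add_zero,
      Finset.sum_const_zero] at h
    rw [ha] at h
    have hb' : (n:ℝ) * (b * ((n:ℝ) - 1)) = 0 := by linarith
    rcases mul_eq_zero.1 hb' with h' | h'
    · exact absurd h' hN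
    · rcases mul_eq_zero.1 h' with h'' | h''
      · exact h''
      · exact absurd h'' hN1
  -- column equation
  have h5col : ∀ j, ∑ i, m 5 i j = 0 := by
    intro j
    calc ∑ i, m 5 i j = ∑ i, -m 5 j i := Finset.sum_congr rfl (fun i _ => h5a i j)
    _ = -∑ i, m 5 j i := by rw [Finset.sum_neg_distrib]
    _ = 0 := by rw [h5row j]; ring
  have h6col : ∀ j, ∑ i, m 6 i j = 0 := by
    intro j
    calc ∑ i, m 6 i j = ∑ i, m 6 j i := Finset.sum_congr rfl (fun i _ => h6s i j)
    _ = 0 := h6row j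
  have hCol : ∀ j, a + b * ((n:ℝ) - 1) + m 2 j j + (n:ℝ) * c j = 0 := by
    intro j
    have h := Finset.sum_congr rfl (fun i (_ : i ∈ Finset.univ) => hS i j)
    simp only [Finset.sum_add_distrib, ← Finset.mul_sum, hone' j, hnm' j, hm2col j,
      Finset.sum_const, Finset.card_univ, Fintype.card_fin, nsmul_eq_mul,
      hr, h5col j, h6col j, Finset.sum_const_zero, add_zero, mul_one] at h
    linarith
  -- solve for r, c, m2 diag
  have hrc : ∀ i, r i = 0 ∧ c i = 0 ∧ m 2 i i = 0 := by
    intro i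
    have e1 := hRow i
    have e2 := hCol i
    have e3 := hSd i
    rw [ha, hb] at e1 e2
    rw [ha] at e3
    have hcr : c i = r i := by
      have h' : (n:ℝ) * c i = (n:ℝ) * r i := by linarith
      exact mul_left_cancel₀ hN h'
    have hri : r i = 0 := by
      have hz : ((n:ℝ) - 2) * r i = 0 := by
        rw [hcr] at e3
        linear_combination e1 - e3
      have hne : (n:ℝ) - 2 ≠ 0 := fun h => hN2 (by linarith)
      exact (mul_eq_zero.1 hz).resolve_left hne
    have hci : c i = 0 := by rw [hcr, hri]
    refine ⟨hri, hci, by linarith⟩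
  have hm2 : m 2 = 0 := by
    ext i j
    by_cases hij : i = j
    · subst hij; simpa using (hrc i).2.2
    · simpa using h2off i j hij
  have hm3 : m 3 = 0 := by
    ext i j; rw [h3]; simpa using (hrc i).1
  have hm4 : m 4 = 0 := by
    ext i j; rw [h4]; simpa using (hrc j).2.1
  have hm0 : m 0 = 0 := by rw [h0, ha]; simp
  have hm1 : m 1 = 0 := by rw [h1, hb]; simp
  have h56 : ∀ i j, m 5 i j + m 6 i j = 0 := by
    intro i j
    have h := hS i j
    rw [ha, hb] at h
    have h2z : m 2 i j = 0 := by rw [hm2]; simp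
    have h3z : r i = 0 := (hrc i).1
    have h4z : c j = 0 := (hrc j).2.1
    rw [h2z, h3z, h4z] at h
    split_ifs at h <;> linarith
  have hm6 : m 6 = 0 := by
    ext i j
    have e1 := h56 i j
    have e2 := h56 j i
    have e3 := h5a i j
    have e4 := h6s i j
    simpa using by linarith
  have hm5 : m 5 = 0 := by
    ext i j
    have e1 := h56 i j
    have h6z : m 6 i j = 0 := by rw [hm6]; simp
    have : m 5 i j = 0 := by linarith
    simpa using this
  intro i
  fin_cases i
  · exact hm0
  · exact hm1
  · exact hm2
  · exact hm3
  · exact hm4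
  · exact hm5
  · exact hm6

end Zero
/-- For `n ≥ 4`, `ℝⁿˣⁿ` is the internal direct sum of
`V₀, …, V₆`, and each of them is invariant under the `Sₙ`-action. -/
theorem matrixSpace_isInternal_directSum_of_seven (hn : 4 ≤ n) :
    DirectSum.IsInternal (V n) ∧
      ∀ (i : Fin 7) (σ : Equiv.Perm (Fin n)) (X : Matrix (Fin n) (Fin n) ℝ),
        X ∈ V n i → act n σ X ∈ V n i := by
  constructor
  · have key : ∀ x : DirectSum (Fin 7) (fun i => ↥(V n i)),
        DirectSum.coeAddMonoidHom (V n) x = ∑ i, ((x i : Matrix (Fin n) (Fin n) ℝ)) := by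
      intro x
      conv_lhs => rw [← DirectSum.sum_univ_of x]
      rw [map_sum]
      simp [DirectSum.coeAddMonoidHom_of]
    constructor
    · intro x y hxy
      have hz : DirectSum.coeAddMonoidHom (V n) (x - y) = 0 := by
        rw [map_sub, hxy, sub_self]
      rw [key] at hz
      have hz2 := eq_zero_of_sum hn (fun i => ((x - y) i : Matrix (Fin n) (Fin n) ℝ))
        (fun i => ((x - y) i).2) hz
      have hcomp : ∀ i, x i = y i := by
        intro i
        have h := hz2 i
        simp only [DFinsupp.sub_apply] at h
        have h' : ((x i : Matrix (Fin n) (Fin n) ℝ)) - (y i : Matrix (Fin n) (Fin n) ℝ) = 0 := by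
          simpa using h
        exact Subtype.ext (sub_eq_zero.mp h')
      rw [← DirectSum.sum_univ_of x, ← DirectSum.sum_univ_of y]
      exact Finset.sum_congr rfl (fun i _ => by rw [hcomp i])
    · intro X
      obtain ⟨m, hmem, hsumX⟩ := exists_decomp X hn
      refine ⟨∑ i, DirectSum.of (fun i => ↥(V n i)) i ⟨m i, hmem i⟩, ?_⟩
      rw [map_sum]
      simpa [DirectSum.coeAddMonoidHom_of] using hsumX
  · intro i σ X hX
    fin_cases i
    · obtain ⟨a, rfl⟩ := hX
      exact ⟨a, by ext i j; simp [act, Matrix.one_apply, EmbeddingLike.apply_eq_iff_eq]⟩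
    · obtain ⟨a, rfl⟩ := hX
      exact ⟨a, by ext i j; simp [act, J, Matrix.one_apply, EmbeddingLike.apply_eq_iff_eq]⟩
    · obtain ⟨hoff, htr⟩ := hX
      refine ⟨fun i j hij => hoff _ _ (fun h => hij (σ⁻¹.injective h)), ?_⟩
      exact (Equiv.sum_comp σ⁻¹ (fun k => X k k)).trans htr
    · obtain ⟨r, hr, rfl⟩ := hX
      exact ⟨fun i => r (σ⁻¹ i), (Equiv.sum_comp σ⁻¹ r).trans hr, by ext i j; simp [act]⟩
    · obtain ⟨c, hc, rfl⟩ := hX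
      exact ⟨fun j => c (σ⁻¹ j), (Equiv.sum_comp σ⁻¹ c).trans hc, by ext i j; simp [act]⟩
    · obtain ⟨ht, hrow⟩ := hX
      have hpt : ∀ i j, X i j = -X j i := by
        intro i j; conv_lhs => rw [ht]
        simp
      refine ⟨?_, fun i => ?_⟩
      · ext i j
        simp only [act, Matrix.neg_apply, Matrix.transpose_apply, Matrix.of_apply]
        exact hpt _ _
      · exact (Equiv.sum_comp σ⁻¹ (fun j => X (σ⁻¹ i) j)).trans (hrow _)
    · obtain ⟨ht, hrow, hdiag⟩ := hX
      have hpt : ∀ i j, X i j = X j i := by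
        intro i j; conv_lhs => rw [ht]
        simp
      refine ⟨?_, fun i => ?_, fun i => ?_⟩
      · ext i j
        simp only [act, Matrix.transpose_apply, Matrix.of_apply]
        exact hpt _ _
      · exact (Equiv.sum_comp σ⁻¹ (fun j => X (σ⁻¹ i) j)).trans (hrow _)
      · exact hdiag _

end GraphDecomp
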